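/- Let r > 0, b > r, let μ ∈ P_b be a probability measure on (-∞, 0], let ξ ∈ C_r, let T > 0 and k ≥ T. Let x, y : (-∞, T] → ℝ^n be Borel measurable functions with x(u) = ξ(u) and y(u) = ξ(u) for all u ≤ 0. Then for every s ∈ [0, T], ∫_{(-∞,0]} |x_s(u) − π_k(y_s)(u)| μ(du) ≤ ∫_{[-s,0]} |x(s + u) − y(s + u)| μ(du) + 2 ‖ξ‖_r μ^{(b)} e^{−(b − r) k}. -/

import Mathlib

open MeasureTheory
open scoped ENNReal

/-- The weighted sup norm `‖φ‖_r = sup_{u ≤ 0} e^{r u} |φ(u)|`. -/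
noncomputable def crNorm (n : ℕ) (r : ℝ) (φ : ℝ → EuclideanSpace ℝ (Fin n)) : ℝ :=
  sSup ((fun u => Real.exp (r * u) * ‖φ u‖) '' Set.Iic 0)

/-- Membership in the phase space `C_r`. -/
def MemCr (n : ℕ) (r : ℝ) (φ : ℝ → EuclideanSpace ℝ (Fin n)) : Prop :=
  ContinuousOn φ (Set.Iic 0) ∧
    BddAbove ((fun u => Real.exp (r * u) * ‖φ u‖) '' Set.Iic 0)

/-- `μ^{(b)} = ∫_{(-∞,0]} e^{-b u} μ(du)`. -/
noncomputable def muExp (μ : Measure ℝ) (b : ℝ) : ℝ≥0∞ :=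
  ∫⁻ u, ENNReal.ofReal (Real.exp (-b * u)) ∂μ

/-- The truncation mapping `π_k`: `π_k(φ)(u) = φ(u)` for `u ∈ [-k, 0]` and
`π_k(φ)(u) = φ(-k)` for `u < -k`. -/
noncomputable def trunc (n : ℕ) (k : ℝ) (φ : ℝ → EuclideanSpace ℝ (Fin n)) :
    ℝ → EuclideanSpace ℝ (Fin n) :=
  fun u => if -k ≤ u then φ u else φ (-k)

/-- Let `r > 0`, `b > r`, `μ ∈ P_b` a probability measure on `(-∞,0]`, `ξ ∈ C_r`,
`T > 0`, `k ≥ T`, and let `x, y` be Borel measurable with `x = y = ξ` on `(-∞,0]`.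
Then for every `s ∈ [0,T]`, denoting by `x_s(u) = x(s+u)` the segment,
`∫_{(-∞,0]} |x_s(u) - π_k(y_s)(u)| μ(du)
  ≤ ∫_{[-s,0]} |x(s+u) - y(s+u)| μ(du) + 2 ‖ξ‖_r μ^{(b)} e^{-(b-r)k}`. -/
theorem stmt_11 (n : ℕ) (r b k T s : ℝ) (hr : 0 < r) (hrb : r < b)
    (μ : Measure ℝ) [IsProbabilityMeasure μ] (hsupp : μ (Set.Ioi 0) = 0)
    (hfin : muExp μ b < ⊤)
    (ξ : ℝ → EuclideanSpace ℝ (Fin n)) (hξ : MemCr n r ξ)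
    (hT : 0 < T) (hTk : T ≤ k)
    (x y : ℝ → EuclideanSpace ℝ (Fin n)) (hx : Measurable x) (hy : Measurable y)
    (hxξ : ∀ u ≤ (0 : ℝ), x u = ξ u) (hyξ : ∀ u ≤ (0 : ℝ), y u = ξ u)
    (hs : s ∈ Set.Icc 0 T) :
    (∫⁻ u in Set.Iic 0,
        ENNReal.ofReal ‖x (s + u) - trunc n k (fun v => y (s + v)) u‖ ∂μ) ≤
      (∫⁻ u in Set.Icc (-s) 0, ENNReal.ofReal ‖x (s + u) - y (s + u)‖ ∂μ) +
        ENNReal.ofReal (2 * crNorm n r ξ * Real.exp (-(b - r) * k)) * muExp μ b := by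

  obtain ⟨hs0, hsT⟩ := hs
  set N := crNorm n r ξ with hNdef
  -- N bounds
  have hNub : ∀ v ≤ (0:ℝ), ‖ξ v‖ ≤ N * Real.exp (-r * v) := by
    intro v hv
    have hle : Real.exp (r * v) * ‖ξ v‖ ≤ N :=
      le_csSup hξ.2 ⟨v, hv, rfl⟩
    have h1 : Real.exp (-r * v) * Real.exp (r * v) = 1 := by
      rw [← Real.exp_add]; ring_nf; exact Real.exp_zero
    nlinarith [Real.exp_pos (-r * v), Real.exp_pos (r * v), norm_nonneg (ξ v)]
  have hN0 : 0 ≤ N := by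
    have := hNub 0 le_rfl
    have := norm_nonneg (ξ 0)
    nlinarith [Real.exp_pos (-r * (0:ℝ))]
  set E := Real.exp (-(b - r) * k) with hEdef
  have hE0 : 0 < E := Real.exp_pos _
  set C := ENNReal.ofReal (2 * N * E) with hCdef
  -- pointwise bound on Iio (-s)
  have hpt : ∀ u ∈ Set.Iio (-s),
      ENNReal.ofReal ‖x (s + u) - trunc n k (fun v => y (s + v)) u‖ ≤
        C * ENNReal.ofReal (Real.exp (-b * u)) := by
    intro u hu
    have hu' : u < -s := hu
    have hsu : s + u ≤ 0 := by linarith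
    have hxs : x (s + u) = ξ (s + u) := hxξ _ hsu
    by_cases hk : -k ≤ u
    · have : trunc n k (fun v => y (s + v)) u = y (s + u) := by
        simp [trunc, hk]
      rw [this, hxs, hyξ _ hsu]
      simp
    · push_neg at hk
      have htr : trunc n k (fun v => y (s + v)) u = y (s + -k) := by
        simp [trunc, not_le.mpr hk]
      have hsk : s + -k ≤ 0 := by linarith
      rw [htr, hxs, hyξ _ hsk]
      have h1 : ‖ξ (s + u) - ξ (s + -k)‖ ≤ ‖ξ (s + u)‖ + ‖ξ (s + -k)‖ :=
        norm_sub_le _ _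
      have h2 : ‖ξ (s + u)‖ ≤ N * Real.exp (-r * (s + u)) := hNub _ hsu
      have h3 : ‖ξ (s + -k)‖ ≤ N * Real.exp (-r * (s + -k)) := hNub _ hsk
      have hb1 : Real.exp (-r * (s + u)) ≤ E * Real.exp (-b * u) := by
        rw [hEdef, ← Real.exp_add]
        apply Real.exp_le_exp.mpr
        nlinarith
      have hb2 : Real.exp (-r * (s + -k)) ≤ E * Real.exp (-b * u) := by
        rw [hEdef, ← Real.exp_add]
        apply Real.exp_le_exp.mpr
        nlinarith
      have hfinal : ‖ξ (s + u) - ξ (s + -k)‖ ≤ 2 * N * E * Real.exp (-b * u) := by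
        nlinarith
      calc ENNReal.ofReal ‖ξ (s + u) - ξ (s + -k)‖
          ≤ ENNReal.ofReal (2 * N * E * Real.exp (-b * u)) :=
            ENNReal.ofReal_le_ofReal hfinal
        _ = C * ENNReal.ofReal (Real.exp (-b * u)) := by
            rw [hCdef, ← ENNReal.ofReal_mul (by positivity)]
  -- split the integral
  have hsub : Set.Iic (0:ℝ) ⊆ Set.Iio (-s) ∪ Set.Icc (-s) 0 := by
    intro u hu
    rcases lt_or_ge u (-s) with h | h
    · exact Or.inl h
    · exact Or.inr ⟨h, hu⟩
  calc (∫⁻ u in Set.Iic 0,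
        ENNReal.ofReal ‖x (s + u) - trunc n k (fun v => y (s + v)) u‖ ∂μ)
      ≤ ∫⁻ u in Set.Iio (-s) ∪ Set.Icc (-s) 0,
        ENNReal.ofReal ‖x (s + u) - trunc n k (fun v => y (s + v)) u‖ ∂μ :=
        lintegral_mono_set hsub
    _ ≤ (∫⁻ u in Set.Iio (-s),
          ENNReal.ofReal ‖x (s + u) - trunc n k (fun v => y (s + v)) u‖ ∂μ) +
        ∫⁻ u in Set.Icc (-s) 0,
          ENNReal.ofReal ‖x (s + u) - trunc n k (fun v => y (s + v)) u‖ ∂μ :=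
        lintegral_union_le _ _ _
    _ ≤ (∫⁻ u in Set.Iio (-s), C * ENNReal.ofReal (Real.exp (-b * u)) ∂μ) +
        ∫⁻ u in Set.Icc (-s) 0, ENNReal.ofReal ‖x (s + u) - y (s + u)‖ ∂μ := by
        gcongr ?_ + ?_
        ·
          exact setLIntegral_mono' measurableSet_Iio hpt
        ·
          apply le_of_eq
          apply setLIntegral_congr_fun measurableSet_Icc
          intro u hu
          have : trunc n k (fun v => y (s + v)) u = y (s + u) := by
            have : -k ≤ u := by
              have := hu.1
              linarith
            simp [trunc, this]
          simp only [this]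
    _ ≤ C * muExp μ b +
        ∫⁻ u in Set.Icc (-s) 0, ENNReal.ofReal ‖x (s + u) - y (s + u)‖ ∂μ := by
        gcongr
        rw [lintegral_const_mul' _ _ ENNReal.ofReal_ne_top]
        gcongr
        exact setLIntegral_le_lintegral _ _
    _ = (∫⁻ u in Set.Icc (-s) 0, ENNReal.ofReal ‖x (s + u) - y (s + u)‖ ∂μ) +
        C * muExp μ b := add_comm _ _
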